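/- Fix r = 4/3. The line L = {(x, y) ∈ ℝ² : x = −y/3 − 1} is invariant under the flow of the system ẋ = (x + y)² − 1, ẏ = r·y·(3 − y): at every point (x, y) ∈ L the vector field G(x, y) = ((x + y)² − 1, r·y·(3 − y)) is tangent to L, i.e., its first component equals −1/3 times its second component; consequently any solution with initial condition on L remains on L for all time. -/

import Mathlib

/-- At the critical rate `r = 4/3`, the line `L = {x = −y/3 − 1}` is invariant under
`ẋ = (x + y)² − 1, ẏ = r·y·(3 − y)`: at every point of `L` the first component of the
vector field equals `−1/3` times the second component (tangency), and consequently any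
solution with initial condition on `L` remains on `L` for all time. -/
theorem critical_line_invariant :
    let r : ℝ := 4 / 3
    let L : Set (ℝ × ℝ) := {v : ℝ × ℝ | v.1 = -v.2 / 3 - 1}
    (∀ v ∈ L, (v.1 + v.2) ^ 2 - 1 = (-(1 / 3)) * (r * v.2 * (3 - v.2))) ∧
    (∀ γ : ℝ → ℝ × ℝ,
      (∀ t : ℝ, HasDerivAt γ
        (((γ t).1 + (γ t).2) ^ 2 - 1, r * (γ t).2 * (3 - (γ t).2)) t) →
      γ 0 ∈ L → ∀ t : ℝ, γ t ∈ L) := by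
  intro r L
  constructor
  · intro v hv
    have hv' : v.1 = -v.2 / 3 - 1 := hv
    rw [hv']; ring
  · intro γ hγ h0 t
    -- the defect function
    set h : ℝ → ℝ := fun s => (γ s).1 + (γ s).2 / 3 + 1 with hh
    -- h satisfies h' = h * (h + 4 y / 3 - 2)
    have hderiv : ∀ s : ℝ,
        HasDerivAt h (h s * (h s + 4 * (γ s).2 / 3 - 2)) s := by
      intro s
      have h1 : HasDerivAt (fun u => (γ u).1) (((γ s).1 + (γ s).2) ^ 2 - 1) s := (hγ s).fst
      have h2 : HasDerivAt (fun u => (γ u).2) (r * (γ s).2 * (3 - (γ s).2)) s := (hγ s).snd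
      have := (h1.add (h2.div_const 3)).add_const 1
      refine this.congr_deriv ?_
      simp only [hh, r]
      ring
    have hcont : Continuous h := by
      exact continuous_iff_continuousAt.mpr fun s => (hderiv s).continuousAt
    have hγcont : Continuous fun s => (γ s).2 := by
      exact continuous_iff_continuousAt.mpr fun s => continuousAt_snd.comp (hγ s).continuousAt
    -- coefficient function
    set f : ℝ → ℝ := fun s => h s + 4 * (γ s).2 / 3 - 2 with hf
    have hfcont : Continuous f := by continuity
    set a : ℝ := -(|t| + 1) with ha
    set b : ℝ := |t| + 1 with hb
    have hab : a ≤ b := by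
      have := abs_nonneg t; simp [ha, hb]; linarith
    -- clamped coefficient
    set g : ℝ → ℝ := fun s => f (max a (min b s)) with hg
    obtain ⟨C, hC⟩ : ∃ C, ∀ x ∈ Set.Icc a b, ‖f x‖ ≤ C :=
      isCompact_Icc.exists_bound_of_continuousOn hfcont.continuousOn
    have hgbound : ∀ s, |g s| ≤ C := by
      intro s
      apply hC
      constructor
      · exact le_max_left _ _
      · exact max_le hab (min_le_left _ _)
    have hC0 : 0 ≤ C := le_trans (abs_nonneg _) (hgbound 0)
    -- Lipschitz in x
    have hlip : ∀ s : ℝ, LipschitzOnWith C.toNNReal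
        (fun x : ℝ => g s * x) Set.univ := by
      intro s
      apply LipschitzOnWith.of_dist_le_mul
      intro x _ y _
      rw [Real.dist_eq, Real.dist_eq, ← mul_sub, abs_mul]
      have : (C.toNNReal : ℝ) = C := Real.coe_toNNReal _ hC0
      rw [this]
      exact mul_le_mul_of_nonneg_right (hgbound s) (abs_nonneg _)
    have h00 : h 0 = 0 := by
      have : (γ 0).1 = -(γ 0).2 / 3 - 1 := h0
      simp only [hh]; linarith
    have key : Set.EqOn h (fun _ => (0 : ℝ)) (Set.Ioo a b) := by
      apply ODE_solution_unique_of_mem_Ioo (fun s _ => hlip s) (t₀ := 0)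
        (f := h) (g := fun _ => (0 : ℝ))
      · constructor
        · simp [ha]; linarith [abs_nonneg t]
        · simp [hb]; linarith [abs_nonneg t]
      · intro s hs
        refine ⟨?_, trivial⟩
        have hclamp : max a (min b s) = s := by
          rw [min_eq_right (le_of_lt hs.2), max_eq_right (le_of_lt hs.1)]
        have : g s * h s = h s * (h s + 4 * (γ s).2 / 3 - 2) := by
          simp only [hg, hclamp, hf]; ring
        rw [this]
        exact hderiv s
      · intro s hs
        refine ⟨?_, trivial⟩
        simpa using hasDerivAt_const s (0 : ℝ)
      · exact h00
    have ht : t ∈ Set.Ioo a b := by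
      constructor
      · simp only [ha]; cases abs_cases t with
        | inl h => linarith [h.1]
        | inr h => linarith [h.1]
      · simp only [hb]; cases abs_cases t with
        | inl h => linarith [h.1]
        | inr h => linarith [h.1]
    have hz : h t = 0 := key ht
    show (γ t).1 = -(γ t).2 / 3 - 1
    simp only [hh] at hz
    linarith
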